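/- arXiv:1911.04086 — 6 statements merged into one kernel-verified Lean document; each statement's English description precedes it below -/
import Mathlib

section
/- Let B(t) be a family of S×S real matrices, continuous in t, and suppose there is a locally integrable function α(t) such that for every t and every column j, Σ_i b_{ij}(t) ≤ -α(t) and all off-diagonal entries of B(t) are nonnegative. Then any solution w(t) of w'(t) = B(t) w(t) satisfies ‖w(t)‖₁ ≤ exp(-∫_s^t α(u) du) ‖w(s)‖₁ for all t ≥ s ≥ 0. -/
open MeasureTheory Set Filter Topology

private lemma sign_mul_self' (x : ℝ) : Real.sign x * x = |x| := by
  rcases lt_trichotomy x 0 with h | h | h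
  · rw [Real.sign_of_neg h, abs_of_neg h]; ring
  · simp [h]
  · rw [Real.sign_of_pos h, abs_of_pos h]; ring

private lemma abs_sign_le (x : ℝ) : |Real.sign x| ≤ 1 := by
  rcases lt_trichotomy x 0 with h | h | h
  · rw [Real.sign_of_neg h]; norm_num
  · simp [h, Real.sign_zero]
  · rw [Real.sign_of_pos h]; norm_num

/-- If B(t) is continuous, essentially non-negative, with column sums ≤ -α(t) for a locally
integrable α, then any solution of w' = B(t)w satisfies
‖w(t)‖₁ ≤ exp(-∫_s^t α) ‖w(s)‖₁ for t ≥ s ≥ 0. -/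
theorem l1_upper_bound_of_column_sums (S : ℕ)
    (B : ℝ → Matrix (Fin S) (Fin S) ℝ)
    (hBc : ∀ i j : Fin S, Continuous fun t => B t i j)
    (α : ℝ → ℝ) (hα : MeasureTheory.LocallyIntegrable α)
    (hsum : ∀ t : ℝ, ∀ j : Fin S, ∑ i : Fin S, B t i j ≤ -α t)
    (hpos : ∀ t : ℝ, ∀ i j : Fin S, i ≠ j → 0 ≤ B t i j)
    (w : ℝ → Fin S → ℝ)
    (hw : ∀ t : ℝ, ∀ i : Fin S,
      HasDerivAt (fun τ => w τ i) (∑ j : Fin S, B t i j * w t j) t) :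
    ∀ s t : ℝ, 0 ≤ s → s ≤ t →
      ∑ i : Fin S, |w t i| ≤ Real.exp (-∫ u in s..t, α u) * ∑ i : Fin S, |w s i| := by
  intro s t hs hst
  rcases Nat.eq_zero_or_pos S with hS | hS
  · subst hS; simp [Real.exp_pos]
  haveI : Nonempty (Fin S) := ⟨⟨0, hS⟩⟩
  -- continuous replacement for α
  set β : ℝ → ℝ := fun u => -(Finset.univ.sup' Finset.univ_nonempty
      fun j : Fin S => ∑ i : Fin S, B u i j) with hβ_def
  have hβc : Continuous β := by
    apply Continuous.neg
    exact Continuous.finset_sup'_apply Finset.univ_nonempty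
      (fun j _ => continuous_finset_sum _ fun i _ => hBc i j)
  have hαβ : ∀ u, α u ≤ β u := by
    intro u
    have h1 : (Finset.univ.sup' Finset.univ_nonempty
        fun j : Fin S => ∑ i : Fin S, B u i j) ≤ -α u :=
      Finset.sup'_le _ _ fun j _ => hsum u j
    simp only [hβ_def]; linarith
  have hcolβ : ∀ u (j : Fin S), ∑ i : Fin S, B u i j ≤ -β u := by
    intro u j
    have := Finset.le_sup' (f := fun j : Fin S => ∑ i : Fin S, B u i j)
      (Finset.mem_univ j)
    simp only [hβ_def]; linarith [this]
  -- notation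
  set V : ℝ → ℝ := fun u => ∑ i : Fin S, |w u i| with hV_def
  set W : ℝ → Fin S → ℝ := fun u i => ∑ j : Fin S, B u i j * w u j with hW_def
  set sg : ℝ → Fin S → ℝ := fun u i =>
    if w u i = 0 then Real.sign (W u i) else Real.sign (w u i) with hsg_def
  set d : ℝ → ℝ := fun u => ∑ i : Fin S, sg u i * W u i with hd_def
  have hwc : ∀ i : Fin S, Continuous fun τ => w τ i := by
    intro i
    exact continuous_iff_continuousAt.2 fun τ => (hw τ i).continuousAt
  have hVc : Continuous V := by
    apply continuous_finset_sum
    intro i _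
    exact (hwc i).abs
  -- right derivative of each |w · i|
  have habs : ∀ (u : ℝ) (i : Fin S),
      HasDerivWithinAt (fun τ => |w τ i|) (sg u i * W u i) (Ici u) u := by
    intro u i
    rcases eq_or_ne (w u i) 0 with h0 | h0
    · -- w u i = 0 : right derivative is |W u i|
      have hval : sg u i * W u i = |W u i| := by
        simp only [hsg_def, if_pos h0]; exact sign_mul_self' _
      rw [hval, hasDerivWithinAt_iff_tendsto_slope]
      have h1 : Tendsto (slope (fun τ => w τ i) u) (𝓝[≠] u) (𝓝 (W u i)) :=
        hasDerivAt_iff_tendsto_slope.1 (hw u i)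
      have h2 : Tendsto (slope (fun τ => w τ i) u) (𝓝[Ici u \ {u}] u) (𝓝 (W u i)) :=
        h1.mono_left (nhdsWithin_mono _ (by intro x hx; exact hx.2))
      have h3 := h2.abs
      refine h3.congr' ?_
      filter_upwards [self_mem_nhdsWithin] with τ hτ
      have hτu : u < τ := lt_of_le_of_ne hτ.1 (Ne.symm hτ.2)
      rw [slope_def_field, slope_def_field, h0]
      rw [abs_zero, sub_zero, sub_zero, abs_div, abs_of_pos (sub_pos.2 hτu)]
    · rcases h0.lt_or_gt with hneg | hpos'
      · -- w u i < 0
        have hval : sg u i = -1 := by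
          simp only [hsg_def, if_neg h0]; exact Real.sign_of_neg hneg
        have hev : (fun τ => -(w τ i)) =ᶠ[𝓝 u] fun τ => |w τ i| := by
          have : ∀ᶠ τ in 𝓝 u, w τ i < 0 :=
            (hwc i).continuousAt.eventually_lt continuousAt_const hneg
          filter_upwards [this] with τ hτ
          rw [abs_of_neg hτ]
        have := ((hw u i).neg).congr_of_eventuallyEq hev.symm
        have h2 : sg u i * W u i = -W u i := by rw [hval]; ring
        rw [h2]; exact this.hasDerivWithinAt
      · -- 0 < w u i
        have hval : sg u i = 1 := by
          simp only [hsg_def, if_neg h0]; exact Real.sign_of_pos hpos'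
        have hev : (fun τ => w τ i) =ᶠ[𝓝 u] fun τ => |w τ i| := by
          have : ∀ᶠ τ in 𝓝 u, 0 < w τ i :=
            continuousAt_const.eventually_lt (hwc i).continuousAt hpos'
          filter_upwards [this] with τ hτ
          rw [abs_of_pos hτ]
        have := (hw u i).congr_of_eventuallyEq hev.symm
        have h2 : sg u i * W u i = W u i := by rw [hval]; ring
        rw [h2]; exact this.hasDerivWithinAt
  have hVd : ∀ u : ℝ, HasDerivWithinAt V (d u) (Ici u) u := by
    intro u
    exact HasDerivWithinAt.fun_sum fun i _ => habs u i
  -- key differential inequality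
  have hsgw : ∀ u (j : Fin S), sg u j * w u j = |w u j| := by
    intro u j
    rcases eq_or_ne (w u j) 0 with h0 | h0
    · simp [h0]
    · simp only [hsg_def, if_neg h0]; exact sign_mul_self' _
  have hkey : ∀ u : ℝ, d u ≤ -β u * V u := by
    intro u
    have step : ∀ j : Fin S,
        ∑ i : Fin S, sg u i * (B u i j * w u j) ≤ -β u * |w u j| := by
      intro j
      have h1 : ∀ i : Fin S, sg u i * (B u i j * w u j) ≤ B u i j * |w u j| := by
        intro i
        rcases eq_or_ne i j with rfl | hij
        · have : sg u i * (B u i i * w u i) = B u i i * (sg u i * w u i) := by ring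
          rw [this, hsgw u i]
        · have hb : 0 ≤ B u i j := hpos u i j hij
          calc sg u i * (B u i j * w u j)
              ≤ |sg u i * (B u i j * w u j)| := le_abs_self _
            _ = |sg u i| * (B u i j * |w u j|) := by
                rw [abs_mul, abs_mul, abs_of_nonneg hb]
            _ ≤ 1 * (B u i j * |w u j|) := by
                have hsgle : |sg u i| ≤ 1 := by
                  simp only [hsg_def]; split_ifs <;> exact abs_sign_le _
                apply mul_le_mul_of_nonneg_right hsgle
                positivity
            _ = B u i j * |w u j| := one_mul _
      calc ∑ i : Fin S, sg u i * (B u i j * w u j)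
          ≤ ∑ i : Fin S, B u i j * |w u j| := Finset.sum_le_sum fun i _ => h1 i
        _ = (∑ i : Fin S, B u i j) * |w u j| := by rw [Finset.sum_mul]
        _ ≤ -β u * |w u j| := mul_le_mul_of_nonneg_right (hcolβ u j) (abs_nonneg _)
    calc d u = ∑ i : Fin S, ∑ j : Fin S, sg u i * (B u i j * w u j) := by
          simp only [hd_def, hW_def, Finset.mul_sum]
      _ = ∑ j : Fin S, ∑ i : Fin S, sg u i * (B u i j * w u j) := Finset.sum_comm
      _ ≤ ∑ j : Fin S, -β u * |w u j| := Finset.sum_le_sum fun j _ => step j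
      _ = -β u * V u := by rw [← Finset.mul_sum]
  -- Gronwall with barrier
  set A : ℝ → ℝ := fun τ => ∫ u in s..τ, β u with hA_def
  have hA : ∀ τ : ℝ, HasDerivAt A (β τ) τ := fun τ =>
    (hβc.integral_hasStrictDerivAt s τ).hasDerivAt
  have hVs : 0 ≤ V s := Finset.sum_nonneg fun i _ => abs_nonneg _
  have key : V t ≤ Real.exp (-(A t)) * V s := by
    have hlim : Tendsto (fun ε : ℝ => (V s + ε) * Real.exp (ε * (t - s) - A t))
        (𝓝[>] (0 : ℝ)) (𝓝 (Real.exp (-(A t)) * V s)) := by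
      have hc : Continuous fun ε : ℝ => (V s + ε) * Real.exp (ε * (t - s) - A t) := by
        continuity
      have := hc.tendsto 0
      simp only [add_zero, zero_mul, zero_sub] at this
      have h' : (V s) * Real.exp (-(A t)) = Real.exp (-(A t)) * V s := mul_comm _ _
      rw [h'] at this
      exact this.mono_left nhdsWithin_le_nhds
    refine ge_of_tendsto hlim ?_
    filter_upwards [self_mem_nhdsWithin] with ε hε
    have hεpos : 0 < ε := hε
    -- barrier
    set Bar : ℝ → ℝ := fun τ => (V s + ε) * Real.exp (ε * (τ - s) - A τ) with hBar_def
    have hBar' : ∀ x : ℝ, HasDerivAt Bar ((ε - β x) * Bar x) x := by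
      intro x
      have h1 : HasDerivAt (fun τ : ℝ => ε * (τ - s) - A τ) (ε - β x) x := by
        have h2 : HasDerivAt (fun τ : ℝ => ε * (τ - s)) ε x := by
          simpa using ((hasDerivAt_id x).sub_const s).const_mul ε
        simpa using h2.fun_sub (hA x)
      have := (h1.exp).const_mul (V s + ε)
      refine this.congr_deriv ?_
      simp only [hBar_def]; ring
    have hBpos : ∀ x : ℝ, 0 < Bar x := by
      intro x
      simp only [hBar_def]
      positivity
    have hstart : V s ≤ Bar s := by
      simp only [hBar_def, hA_def, intervalIntegral.integral_same, sub_self, mul_zero,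
        zero_sub, neg_zero, Real.exp_zero, mul_one]
      linarith
    have := image_le_of_deriv_right_lt_deriv_boundary (f := V) (f' := d) (a := s) (b := t)
      hVc.continuousOn (fun x _ => hVd x) hstart hBar'
      (fun x _ hVB => by
        have h1 : d x ≤ -β x * V x := hkey x
        have h2 : -β x * V x = -β x * Bar x := by rw [hVB]
        have h3 : 0 < ε * Bar x := mul_pos hεpos (hBpos x)
        nlinarith [hBpos x])
      (right_mem_Icc.2 hst)
    simpa only [hBar_def] using this
  -- compare integrals of α and β
  have hintα : IntervalIntegrable α volume s t :=
    (hα.integrableOn_isCompact isCompact_uIcc).intervalIntegrable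
  have hintβ : IntervalIntegrable β volume s t := hβc.intervalIntegrable s t
  have hint : (∫ u in s..t, α u) ≤ A t := by
    simp only [hA_def]
    exact intervalIntegral.integral_mono_on hst hintα hintβ fun u _ => hαβ u
  calc V t ≤ Real.exp (-(A t)) * V s := key
    _ ≤ Real.exp (-∫ u in s..t, α u) * V s := by
        apply mul_le_mul_of_nonneg_right _ hVs
        exact Real.exp_le_exp.2 (neg_le_neg hint)
end

section
/- Let B(t) be a family of S×S essentially non-negative matrices with column sums satisfying Σ_i b_{ij}(t) ≥ -β(t) for all j and t, where β is locally integrable. Then any solution w(t) of w'(t) = B(t)w(t) with w(s) entrywise nonnegative remains entrywise nonnegative and satisfies ‖w(t)‖₁ ≥ exp(-∫_s^t β(u) du) ‖w(s)‖₁ for all t ≥ s. -/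
open Filter Topology MeasureTheory Set intervalIntegral

/-- Forward invariance of the nonnegative orthant for essentially nonnegative systems. -/
theorem nonneg_invariant_aux (S : ℕ)
    (B : ℝ → Matrix (Fin S) (Fin S) ℝ)
    (hBc : ∀ i j : Fin S, Continuous fun t => B t i j)
    (hpos : ∀ t : ℝ, ∀ i j : Fin S, i ≠ j → 0 ≤ B t i j)
    (w : ℝ → Fin S → ℝ)
    (hw : ∀ t : ℝ, ∀ i : Fin S,
      HasDerivAt (fun τ => w τ i) (∑ j : Fin S, B t i j * w t j) t)
    (s t0 : ℝ) (hst : s ≤ t0) (hws : ∀ i, 0 ≤ w s i) :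
    ∀ u ∈ Set.Icc s t0, ∀ i, 0 ≤ w u i := by
  have hwc : ∀ i, Continuous fun u => w u i := fun i =>
    continuous_iff_continuousAt.2 fun u => (hw u i).continuousAt
  -- a uniform bound on the entries of B on [s, t0]
  obtain ⟨x0, hx0m, hx0⟩ := isCompact_Icc.exists_isMaxOn (Set.nonempty_Icc.2 hst)
    (Continuous.continuousOn (continuous_finset_sum _ fun i _ =>
      continuous_finset_sum _ fun j _ => (hBc i j).abs)
      (f := fun u => ∑ i : Fin S, ∑ j : Fin S, |B u i j|))
  set C : ℝ := ∑ i : Fin S, ∑ j : Fin S, |B x0 i j| with hCdef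
  have hC0 : 0 ≤ C :=
    Finset.sum_nonneg fun i _ => Finset.sum_nonneg fun j _ => abs_nonneg _
  have hCb : ∀ u ∈ Set.Icc s t0, ∀ i j, |B u i j| ≤ C := by
    intro u hu i j
    calc |B u i j| ≤ ∑ j' : Fin S, |B u i j'| :=
          Finset.single_le_sum (f := fun j' => |B u i j'|)
            (fun _ _ => abs_nonneg _) (Finset.mem_univ j)
      _ ≤ ∑ i' : Fin S, ∑ j' : Fin S, |B u i' j'| :=
          Finset.single_le_sum (f := fun i' => ∑ j' : Fin S, |B u i' j'|)
            (fun _ _ => Finset.sum_nonneg fun _ _ => abs_nonneg _) (Finset.mem_univ i)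
      _ ≤ C := hx0 hu
  set g : ℝ → ℝ := fun u => ∑ i : Fin S, max (-(w u i)) 0 with hgdef
  have hg0 : ∀ u, 0 ≤ g u := fun u => Finset.sum_nonneg fun i _ => le_max_right _ _
  have hgc : Continuous g :=
    continuous_finset_sum _ fun i _ => ((hwc i).neg.max continuous_const)
  set K : ℝ := (S : ℝ) * C with hKdef
  have key : ∀ u ∈ Set.Icc s t0, g u ≤ gronwallBound 0 K 0 (u - s) := by
    apply le_gronwallBound_of_liminf_deriv_right_le (f' := fun u => K * g u)
      hgc.continuousOn
    · -- the liminf condition on right difference quotients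
      intro x hx r hr
      apply Filter.Eventually.frequently
      set A : Finset (Fin S) := Finset.univ.filter (fun i : Fin S => w x i ≤ 0) with hA
      set L : ℝ := ∑ i ∈ A, max (-(∑ j : Fin S, B x i j * w x j)) 0 with hL
      have hxmem : x ∈ Set.Icc s t0 := ⟨hx.1, hx.2.le⟩
      have hLle : L ≤ K * g x := by
        have h1 : ∀ i ∈ A, max (-(∑ j : Fin S, B x i j * w x j)) 0 ≤ C * g x := by
          intro i hi
          have hwi : w x i ≤ 0 := (Finset.mem_filter.1 hi).2
          have hterm : ∀ j, -(B x i j * w x j) ≤ C * max (-(w x j)) 0 := by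
            intro j
            rcases eq_or_ne j i with rfl | hne
            · have h2 : max (-(w x j)) 0 = -(w x j) := max_eq_left (neg_nonneg.2 hwi)
              rw [h2]
              have : -(B x j j * w x j) = B x j j * (-(w x j)) := by ring
              rw [this]
              exact mul_le_mul_of_nonneg_right
                ((le_abs_self _).trans (hCb x hxmem j j)) (neg_nonneg.2 hwi)
            · have hB0 : 0 ≤ B x i j := hpos x i j (Ne.symm hne)
              have : -(B x i j * w x j) = B x i j * (-(w x j)) := by ring
              rw [this]
              calc B x i j * (-(w x j)) ≤ B x i j * max (-(w x j)) 0 :=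
                    mul_le_mul_of_nonneg_left (le_max_left _ _) hB0
                _ ≤ C * max (-(w x j)) 0 :=
                    mul_le_mul_of_nonneg_right
                      ((le_abs_self _).trans (hCb x hxmem i j)) (le_max_right _ _)
          have hsum' : -(∑ j : Fin S, B x i j * w x j) ≤ C * g x := by
            rw [← Finset.sum_neg_distrib]
            calc ∑ j : Fin S, -(B x i j * w x j)
                ≤ ∑ j : Fin S, C * max (-(w x j)) 0 :=
                  Finset.sum_le_sum fun j _ => hterm j
              _ = C * g x := by rw [hgdef, Finset.mul_sum]
          exact max_le hsum' (mul_nonneg hC0 (hg0 x))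
        calc L ≤ ∑ _i ∈ A, C * g x := Finset.sum_le_sum h1
          _ = (A.card : ℝ) * (C * g x) := by rw [Finset.sum_const, nsmul_eq_mul]
          _ ≤ (S : ℝ) * (C * g x) := by
              apply mul_le_mul_of_nonneg_right _ (mul_nonneg hC0 (hg0 x))
              exact_mod_cast (A.card_le_univ.trans_eq (by simp))
          _ = K * g x := by rw [hKdef, mul_assoc]
      have hLr : L < r := hLle.trans_lt hr
      have htend : Tendsto (fun z => ∑ i ∈ A, max ((w x i - w z i) * (z - x)⁻¹) 0)
          (𝓝[>] x) (𝓝 L) := by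
        rw [hL]
        apply tendsto_finset_sum
        intro i _
        have hd := (hw x i)
        rw [hasDerivAt_iff_tendsto_slope] at hd
        have h1 : Tendsto (fun z => (w x i - w z i) * (z - x)⁻¹) (𝓝[≠] x)
            (𝓝 (-(∑ j : Fin S, B x i j * w x j))) := by
          refine hd.neg.congr fun z => ?_
          rw [slope_def_field]
          ring
        have h2 := h1.mono_left
          (nhdsWithin_mono x fun z hz => Set.mem_compl_singleton_iff.mpr (ne_of_gt (Set.mem_Ioi.1 hz)))
        have h3 := h2.max (tendsto_const_nhds (α := ℝ) (x := (0:ℝ)))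
        simpa using h3
      have hev1 := htend.eventually_lt_const hLr
      have hev2 : ∀ᶠ z in 𝓝[>] x, ∀ i, i ∉ A → 0 < w z i := by
        rw [eventually_all]
        intro i
        by_cases hi : i ∈ A
        · exact Eventually.of_forall fun z h => absurd hi h
        · have hxi : 0 < w x i := lt_of_not_ge (by simpa [hA] using hi)
          have := ((hwc i).tendsto x).eventually_const_lt hxi
          exact (this.filter_mono nhdsWithin_le_nhds).mono fun z hz _ => hz
      have hev3 : ∀ᶠ z in 𝓝[>] x, x < z := self_mem_nhdsWithin
      filter_upwards [hev1, hev2, hev3] with z h1 h2 h3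
      have hzx : 0 < z - x := sub_pos.2 h3
      have hdiff : g z - g x ≤ ∑ i ∈ A, max (w x i - w z i) 0 := by
        have hsplit : g z - g x = ∑ i : Fin S, (max (-(w z i)) 0 - max (-(w x i)) 0) := by
          rw [hgdef, Finset.sum_sub_distrib]
        rw [hsplit, ← Finset.sum_filter_add_sum_filter_not Finset.univ
          (fun i : Fin S => w x i ≤ 0)]
        have hzero : ∑ i ∈ Finset.univ.filter (fun i : Fin S => ¬ w x i ≤ 0),
            (max (-(w z i)) 0 - max (-(w x i)) 0) = 0 := by
          apply Finset.sum_eq_zero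
          intro i hi
          have hxi : ¬ w x i ≤ 0 := (Finset.mem_filter.1 hi).2
          have hzi : 0 < w z i := h2 i (by simp [hA, hxi])
          rw [max_eq_right (neg_nonpos.2 hzi.le),
            max_eq_right (neg_nonpos.2 (lt_of_not_ge hxi).le), sub_zero]
        rw [hzero, add_zero]
        apply Finset.sum_le_sum
        intro i hi
        have hwi : w x i ≤ 0 := (Finset.mem_filter.1 hi).2
        rw [max_eq_left (neg_nonneg.2 hwi)]
        have : max (-(w z i)) 0 - -(w x i) = max (-(w z i)) 0 + w x i := by ring
        rw [this, ← max_add_add_right]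
        have h4 : -(w z i) + w x i = w x i - w z i := by ring
        rw [h4, zero_add]
        exact max_le_max le_rfl hwi
      calc (z - x)⁻¹ * (g z - g x)
          ≤ (z - x)⁻¹ * ∑ i ∈ A, max (w x i - w z i) 0 :=
            mul_le_mul_of_nonneg_left hdiff (inv_nonneg.2 hzx.le)
        _ = ∑ i ∈ A, max ((w x i - w z i) * (z - x)⁻¹) 0 := by
            rw [Finset.mul_sum]
            refine Finset.sum_congr rfl fun i _ => ?_
            rw [mul_comm, max_mul_of_nonneg _ _ (inv_nonneg.2 hzx.le), zero_mul]
        _ < r := h1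
    · -- initial condition
      exact le_of_eq (Finset.sum_eq_zero fun i _ => max_eq_right (neg_nonpos.2 (hws i)))
    · intro u hu
      simp
  intro u hu i
  have h1 := key u hu
  rw [gronwallBound_ε0_δ0] at h1
  have hgu : g u = 0 := le_antisymm h1 (hg0 u)
  have h2 : max (-(w u i)) 0 = 0 :=
    (Finset.sum_eq_zero_iff_of_nonneg (fun i _ => le_max_right _ _)).1 hgu i
      (Finset.mem_univ i)
  have h3 : -(w u i) ≤ 0 := (le_max_left _ _).trans h2.le
  linarith

/-- If B(t) is essentially non-negative with column sums ≥ -β(t), β locally integrable,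
then a solution of w' = B(t)w with nonnegative initial data stays nonnegative and
satisfies ‖w(t)‖₁ ≥ exp(-∫_s^t β) ‖w(s)‖₁. -/
theorem l1_lower_bound_of_column_sums (S : ℕ)
    (B : ℝ → Matrix (Fin S) (Fin S) ℝ)
    (hBc : ∀ i j : Fin S, Continuous fun t => B t i j)
    (β : ℝ → ℝ) (hβ : MeasureTheory.LocallyIntegrable β)
    (hsum : ∀ t : ℝ, ∀ j : Fin S, -β t ≤ ∑ i : Fin S, B t i j)
    (hpos : ∀ t : ℝ, ∀ i j : Fin S, i ≠ j → 0 ≤ B t i j)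
    (w : ℝ → Fin S → ℝ)
    (hw : ∀ t : ℝ, ∀ i : Fin S,
      HasDerivAt (fun τ => w τ i) (∑ j : Fin S, B t i j * w t j) t) :
    ∀ s t : ℝ, s ≤ t → (∀ i, 0 ≤ w s i) →
      (∀ i, 0 ≤ w t i) ∧
      Real.exp (-∫ u in s..t, β u) * ∑ i : Fin S, |w s i| ≤ ∑ i : Fin S, |w t i| := by
  intro s t hst hws
  have hwc : ∀ i, Continuous fun u => w u i := fun i =>
    continuous_iff_continuousAt.2 fun u => (hw u i).continuousAt
  have hnn := nonneg_invariant_aux S B hBc hpos w hw s t hst hws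
  refine ⟨hnn t (Set.right_mem_Icc.2 hst), ?_⟩
  rcases Nat.eq_zero_or_pos S with hS | hS
  · subst hS
    simp
  · haveI : Nonempty (Fin S) := Fin.pos_iff_nonempty.1 hS
    have hne : (Finset.univ : Finset (Fin S)).Nonempty := Finset.univ_nonempty
    set βs : ℝ → ℝ := fun u => Finset.univ.sup' hne fun j => -(∑ i : Fin S, B u i j)
      with hβsdef
    have hβsc : Continuous βs :=
      Continuous.finset_sup'_apply hne fun j _ =>
        (continuous_finset_sum _ fun i _ => hBc i j).neg
    have hβsb : ∀ u, βs u ≤ β u := fun u =>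
      Finset.sup'_le _ _ fun j _ => neg_le.1 (hsum u j)
    have hβsg : ∀ u j, -(βs u) ≤ ∑ i : Fin S, B u i j := fun u j =>
      neg_le.2 (Finset.le_sup' (fun j => -(∑ i : Fin S, B u i j)) (Finset.mem_univ j))
    set F : ℝ → ℝ := fun u => ∫ v in s..u, βs v with hFdef
    have hFd : ∀ u, HasDerivAt F (βs u) u := fun u =>
      (hβsc.integral_hasStrictDerivAt s u).hasDerivAt
    have hFc : Continuous F := continuous_iff_continuousAt.2 fun u => (hFd u).continuousAt
    set N : ℝ → ℝ := fun u => ∑ i : Fin S, w u i with hNdef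
    have hNc : Continuous N := continuous_finset_sum _ fun i _ => hwc i
    have hNd : ∀ u, HasDerivAt N (∑ i : Fin S, ∑ j : Fin S, B u i j * w u j) u :=
      fun u => HasDerivAt.fun_sum fun i _ => hw u i
    set D : ℝ → ℝ := fun u =>
      Real.exp (F u) * (βs u * N u + ∑ i : Fin S, ∑ j : Fin S, B u i j * w u j) with hDdef
    have hGd : ∀ u, HasDerivAt (fun v => Real.exp (F v) * N v) (D u) u := by
      intro u
      have h1 := ((hFd u).exp.fun_mul (hNd u))
      refine h1.congr_deriv ?_
      rw [hDdef]
      ring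
    have hDc : Continuous D := by
      apply (hFc.rexp).mul
      exact (hβsc.mul hNc).add
        (continuous_finset_sum _ fun i _ => continuous_finset_sum _ fun j _ =>
          (hBc i j).mul (hwc j))
    have hD0 : ∀ u ∈ Set.Icc s t, 0 ≤ D u := by
      intro u hu
      have h1 : ∀ i, 0 ≤ w u i := hnn u hu
      have h2 : -(βs u) * N u ≤ ∑ i : Fin S, ∑ j : Fin S, B u i j * w u j := by
        rw [Finset.sum_comm]
        calc -(βs u) * N u = ∑ j : Fin S, -(βs u) * w u j := by
              rw [hNdef, Finset.mul_sum]
          _ ≤ ∑ j : Fin S, (∑ i : Fin S, B u i j) * w u j :=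
              Finset.sum_le_sum fun j _ =>
                mul_le_mul_of_nonneg_right (hβsg u j) (h1 j)
          _ = ∑ j : Fin S, ∑ i : Fin S, B u i j * w u j := by
              simp [Finset.sum_mul]
      rw [hDdef]
      have h3 : 0 ≤ βs u * N u + ∑ i : Fin S, ∑ j : Fin S, B u i j * w u j := by
        nlinarith [h2]
      positivity
    have hint : ∫ u in s..t, D u = Real.exp (F t) * N t - Real.exp (F s) * N s :=
      intervalIntegral.integral_eq_sub_of_hasDerivAt (fun u _ => hGd u)
        (hDc.intervalIntegrable s t)
    have hmono : Real.exp (F s) * N s ≤ Real.exp (F t) * N t := by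
      have h4 := intervalIntegral.integral_nonneg (μ := volume) hst hD0
      linarith [hint]
    have hFs : F s = 0 := intervalIntegral.integral_same
    have hNs0 : 0 ≤ N s := Finset.sum_nonneg fun i _ => hws i
    have hβsint : IntervalIntegrable βs volume s t := hβsc.intervalIntegrable s t
    have hβint : IntervalIntegrable β volume s t :=
      (hβ.integrableOn_isCompact isCompact_uIcc).intervalIntegrable
    have hintmono : F t ≤ ∫ u in s..t, β u :=
      intervalIntegral.integral_mono_on hst hβsint hβint fun u _ => hβsb u
    have habs_s : ∑ i : Fin S, |w s i| = N s :=
      Finset.sum_congr rfl fun i _ => abs_of_nonneg (hws i)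
    have habs_t : ∑ i : Fin S, |w t i| = N t :=
      Finset.sum_congr rfl fun i _ => abs_of_nonneg (hnn t (Set.right_mem_Icc.2 hst) i)
    rw [habs_s, habs_t]
    calc Real.exp (-∫ u in s..t, β u) * N s
        ≤ Real.exp (-(F t)) * N s :=
          mul_le_mul_of_nonneg_right (Real.exp_le_exp.2 (neg_le_neg hintmono)) hNs0
      _ ≤ N t := by
          rw [hFs, Real.exp_zero, one_mul] at hmono
          calc Real.exp (-(F t)) * N s
              ≤ Real.exp (-(F t)) * (Real.exp (F t) * N t) :=
                mul_le_mul_of_nonneg_left hmono (Real.exp_nonneg _)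
            _ = N t := by
                rw [← mul_assoc, ← Real.exp_add, neg_add_cancel, Real.exp_zero, one_mul]
end

section
/- Let X(t) be a finite homogeneous Markov chain on {0,…,S} with batch arrival intensities q_{k,k+i} = λ for i ≥ 2, q_{k,k+1} = 0, and service intensities q_{k,k-1} = μ_k > 0. With weights d₁ = 1, d_{k+1} = d_k √(μ_k/λ), the transformed reduced matrix B** has diagonal entries -((S-k+1)λ + μ_k) for k < S and -μ_S for k = S, superdiagonal entries √(λ μ_k), and subdiagonal entries -√(λ μ_k). For any solution w(t) of w' = B** w, d/dt ‖w(t)‖₂² = 2 Σ_k b**_{kk} w_k(t)² ≤ -2β* ‖w(t)‖₂², where β* = min(Sλ + μ₁, (S-1)λ + μ₂, …, 2λ + μ_{S-1}, μ_S); hence ‖w(t)‖₂ ≤ e^{-β* t} ‖w(0)‖₂. -/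
/-- For the queue with batch arrivals (rate λ for batches of size ≥ 2) and services μ_k,
the transformed reduced matrix B** has skew-symmetric off-diagonal part, so
d/dt ‖w‖₂² = 2 Σ_k b**_{kk} w_k² ≤ -2β* ‖w‖₂², where β* is the minimum of the negated
diagonal entries, and hence ‖w(t)‖₂ ≤ e^{-β* t} ‖w(0)‖₂. -/
theorem batch_arrival_l2_decay (n : ℕ)
    (lam : ℝ) (hlampos : 0 < lam)
    (mu : Fin (n + 1) → ℝ) (hmu : ∀ k, 0 < mu k)
    (B : Matrix (Fin (n + 1)) (Fin (n + 1)) ℝ)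
    (hB : B = Matrix.of fun i j : Fin (n + 1) =>
      if i = j then
        (if (i : ℕ) = n then -(mu i)
         else -(((n + 1 - (i : ℕ) : ℕ) : ℝ) * lam + mu i))
      else if (j : ℕ) = (i : ℕ) + 1 then Real.sqrt (lam * mu i)
      else if (i : ℕ) = (j : ℕ) + 1 then -Real.sqrt (lam * mu j)
      else 0)
    (βs : ℝ)
    (hβs : βs = Finset.univ.inf' Finset.univ_nonempty fun k : Fin (n + 1) => -(B k k))
    (w : ℝ → Fin (n + 1) → ℝ)
    (hw : ∀ t : ℝ, ∀ i : Fin (n + 1),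
      HasDerivAt (fun τ => w τ i) (∑ j : Fin (n + 1), B i j * w t j) t) :
    (∀ t : ℝ,
      HasDerivAt (fun τ => ∑ k : Fin (n + 1), (w τ k) ^ 2)
        (2 * ∑ k : Fin (n + 1), B k k * (w t k) ^ 2) t) ∧
    (∀ t : ℝ,
      2 * ∑ k : Fin (n + 1), B k k * (w t k) ^ 2 ≤
        -(2 * βs) * ∑ k : Fin (n + 1), (w t k) ^ 2) ∧
    (∀ t : ℝ, 0 ≤ t →
      Real.sqrt (∑ k : Fin (n + 1), (w t k) ^ 2) ≤
        Real.exp (-βs * t) * Real.sqrt (∑ k : Fin (n + 1), (w 0 k) ^ 2)) := by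
  -- skew-symmetry off the diagonal
  have skew : ∀ i j : Fin (n + 1), i ≠ j → B j i = -B i j := by
    intro i j hij
    subst hB
    simp only [Matrix.of_apply, if_neg hij, if_neg (Ne.symm hij)]
    split_ifs with h1 h2 h3 h4 h5 h6 <;> first | ring1 | (exfalso; omega)
  -- cancellation in the quadratic form
  have key : ∀ t : ℝ,
      (∑ k : Fin (n + 1), ∑ j : Fin (n + 1), B k j * w t j * w t k)
        = ∑ k : Fin (n + 1), B k k * (w t k) ^ 2 := by
    intro t
    have h2 :
        (∑ k : Fin (n + 1), ∑ j : Fin (n + 1), B k j * w t j * w t k)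
          + (∑ k : Fin (n + 1), ∑ j : Fin (n + 1), B k j * w t j * w t k)
        = ∑ k : Fin (n + 1), ∑ j : Fin (n + 1),
            (B k j * w t j * w t k + B j k * w t k * w t j) := by
      conv_lhs => rw [show (∑ k : Fin (n + 1), ∑ j : Fin (n + 1), B k j * w t j * w t k)
          + (∑ k : Fin (n + 1), ∑ j : Fin (n + 1), B k j * w t j * w t k)
        = (∑ k : Fin (n + 1), ∑ j : Fin (n + 1), B k j * w t j * w t k)
          + (∑ j : Fin (n + 1), ∑ k : Fin (n + 1), B k j * w t j * w t k) from by
          rw [Finset.sum_comm]]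
      rw [← Finset.sum_add_distrib]
      congr 1
      ext k
      rw [← Finset.sum_add_distrib]
    have h3 : ∀ k j : Fin (n + 1),
        B k j * w t j * w t k + B j k * w t k * w t j
          = if k = j then 2 * (B k k * (w t k) ^ 2) else 0 := by
      intro k j
      by_cases hkj : k = j
      · subst hkj; simp; ring
      · rw [if_neg hkj, skew k j hkj]; ring
    have h4 : (∑ k : Fin (n + 1), ∑ j : Fin (n + 1),
        (B k j * w t j * w t k + B j k * w t k * w t j))
        = ∑ k : Fin (n + 1), 2 * (B k k * (w t k) ^ 2) := by
      refine Finset.sum_congr rfl fun k _ => ?_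
      rw [Finset.sum_congr rfl fun j _ => h3 k j, Finset.sum_ite_eq _ k
        (fun _ => 2 * (B k k * (w t k) ^ 2))]
      simp
    have := h2.trans h4
    rw [← Finset.mul_sum] at this
    linarith
  -- Part 1
  have part1 : ∀ t : ℝ,
      HasDerivAt (fun τ => ∑ k : Fin (n + 1), (w τ k) ^ 2)
        (2 * ∑ k : Fin (n + 1), B k k * (w t k) ^ 2) t := by
    intro t
    have h := HasDerivAt.fun_sum (u := Finset.univ)
      (A := fun (k : Fin (n + 1)) (τ : ℝ) => (w τ k) ^ 2)
      (A' := fun k => 2 * w t k ^ 1 * (∑ j : Fin (n + 1), B k j * w t j))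
      (fun k _ => (hw t k).pow 2)
    have he : (∑ k : Fin (n + 1), 2 * w t k ^ 1 * (∑ j : Fin (n + 1), B k j * w t j))
        = 2 * ∑ k : Fin (n + 1), B k k * (w t k) ^ 2 := by
      rw [← key t, Finset.mul_sum]
      refine Finset.sum_congr rfl fun k _ => ?_
      rw [Finset.mul_sum, Finset.mul_sum]
      refine Finset.sum_congr rfl fun j _ => ?_
      ring
    rwa [he] at h
  -- diagonal bound
  have hdiag : ∀ k : Fin (n + 1), B k k ≤ -βs := by
    intro k
    have := Finset.inf'_le (fun k : Fin (n + 1) => -(B k k)) (Finset.mem_univ k)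
    rw [← hβs] at this
    linarith
  -- Part 2
  have part2 : ∀ t : ℝ,
      2 * ∑ k : Fin (n + 1), B k k * (w t k) ^ 2 ≤
        -(2 * βs) * ∑ k : Fin (n + 1), (w t k) ^ 2 := by
    intro t
    have h : (∑ k : Fin (n + 1), B k k * (w t k) ^ 2)
        ≤ ∑ k : Fin (n + 1), (-βs) * (w t k) ^ 2 := by
      refine Finset.sum_le_sum fun k _ => ?_
      exact mul_le_mul_of_nonneg_right (hdiag k) (sq_nonneg _)
    rw [← Finset.mul_sum] at h
    nlinarith
  refine ⟨part1, part2, ?_⟩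
  -- Part 3: Gronwall
  set f : ℝ → ℝ := fun t => ∑ k : Fin (n + 1), (w t k) ^ 2 with hf
  have hfnonneg : ∀ t, 0 ≤ f t := fun t => Finset.sum_nonneg fun k _ => sq_nonneg _
  set g : ℝ → ℝ := fun t => Real.exp (2 * βs * t) * f t with hg
  have hgderiv : ∀ t, HasDerivAt g
      (2 * βs * Real.exp (2 * βs * t) * f t
        + Real.exp (2 * βs * t) * (2 * ∑ k : Fin (n + 1), B k k * (w t k) ^ 2)) t := by
    intro t
    have h1 : HasDerivAt (fun τ => Real.exp (2 * βs * τ)) (2 * βs * Real.exp (2 * βs * t)) t := by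
      have h0 : HasDerivAt (fun τ : ℝ => 2 * βs * τ) (2 * βs) t := by
        simpa using (hasDerivAt_id t).const_mul (2 * βs)
      have := h0.exp
      convert this using 1
      ring
    simpa using h1.fun_mul (part1 t)
  have hganti : Antitone g := by
    apply antitone_of_deriv_nonpos
    · exact fun t => (hgderiv t).differentiableAt
    · intro t
      rw [(hgderiv t).deriv]
      have h2 := part2 t
      have h3 : (0 : ℝ) < Real.exp (2 * βs * t) := Real.exp_pos _
      nlinarith [hfnonneg t]
  intro t ht
  have hgle : g t ≤ g 0 := hganti ht
  simp only [hg, mul_zero, Real.exp_zero, one_mul] at hgle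
  have hft : f t ≤ Real.exp (-(2 * βs) * t) * f 0 := by
    have := mul_le_mul_of_nonneg_left hgle (Real.exp_nonneg (-(2 * βs) * t))
    rw [← mul_assoc, ← Real.exp_add] at this
    simpa using this
  calc Real.sqrt (f t) ≤ Real.sqrt (Real.exp (-(2 * βs) * t) * f 0) :=
        Real.sqrt_le_sqrt hft
    _ = Real.exp (-βs * t) * Real.sqrt (f 0) := by
        rw [Real.sqrt_mul (Real.exp_nonneg _),
          show (-(2 * βs) * t) = (-βs * t) + (-βs * t) by ring, Real.exp_add, ← sq,
          Real.sqrt_sq (Real.exp_nonneg _)]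
end

section
/- Let A(t) be a family of S×S matrices and D = diag(d₁,…,d_S) an invertible diagonal matrix with nonzero real entries. Suppose x(t) solves x' = A(t)x on [t₁,t₂], each coordinate x_i(t) has the same sign as d_i throughout [t₁,t₂], and the matrix Ã(t) = D A(t) D⁻¹ has all column sums at most -α(t). Then the function N(t) = Σ_k d_k x_k(t) satisfies N(t) ≤ exp(-∫_{t₁}^{t} α(τ) dτ) N(t₁) for t ∈ [t₁,t₂]. -/
/-- Differential-inequalities method: if on [t₁,t₂] each coordinate of the solution x of
x' = A(t)x has the same (fixed) sign as d_i, and the column sums of D A(t) D⁻¹ are at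
most -α(t), then N(t) = Σ_k d_k x_k(t) satisfies
N(t) ≤ exp(-∫_{t₁}^t α) N(t₁). -/
theorem diff_ineq_weighted_bound (S : ℕ)
    (A : ℝ → Matrix (Fin S) (Fin S) ℝ)
    (d : Fin S → ℝ) (hd : ∀ i, d i ≠ 0)
    (t₁ t₂ : ℝ) (ht : t₁ ≤ t₂)
    (x : ℝ → Fin S → ℝ)
    (hx : ∀ t ∈ Set.Icc t₁ t₂, ∀ i : Fin S,
      HasDerivAt (fun τ => x τ i) (∑ j : Fin S, A t i j * x t j) t)
    (hsign : ∀ t ∈ Set.Icc t₁ t₂, ∀ i : Fin S, 0 < d i * x t i)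
    (α : ℝ → ℝ) (hα : IntervalIntegrable α MeasureTheory.volume t₁ t₂)
    (hsum : ∀ t ∈ Set.Icc t₁ t₂, ∀ j : Fin S,
      ∑ i : Fin S,
        (Matrix.diagonal d * A t * Matrix.diagonal fun k => (d k)⁻¹) i j ≤ -α t) :
    ∀ t ∈ Set.Icc t₁ t₂,
      ∑ k : Fin S, d k * x t k ≤
        Real.exp (-∫ τ in t₁..t, α τ) * ∑ k : Fin S, d k * x t₁ k := by
  rcases Nat.eq_zero_or_pos S with hS | hS
  · subst hS
    intro t _
    simp
  intro t htmem
  obtain ⟨ht1, ht2⟩ := htmem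
  set N : ℝ → ℝ := fun τ => ∑ k : Fin S, d k * x τ k with hN
  set Dv : ℝ → ℝ := fun τ => ∑ k : Fin S, d k * ∑ j : Fin S, A τ k j * x τ j with hDv
  have hne : (Finset.univ : Finset (Fin S)).Nonempty := by
    simpa [Finset.univ_nonempty_iff, ← Fin.pos_iff_nonempty] using hS
  have Npos : ∀ τ ∈ Set.Icc t₁ t₂, 0 < N τ := fun τ hτ =>
    Finset.sum_pos (fun k _ => hsign τ hτ k) hne
  have hNd : ∀ τ ∈ Set.Icc t₁ t₂, HasDerivAt N (Dv τ) τ := by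
    intro τ hτ
    exact HasDerivAt.fun_sum fun k _ => (hx τ hτ k).const_mul (d k)
  -- bound on the derivative
  have hDb : ∀ τ ∈ Set.Icc t₁ t₂, Dv τ ≤ -α τ * N τ := by
    intro τ hτ
    have key : Dv τ = ∑ j : Fin S, (∑ i : Fin S, d i * A τ i j * (d j)⁻¹) * (d j * x τ j) := by
      simp only [hDv, Finset.mul_sum, Finset.sum_mul]
      rw [Finset.sum_comm]
      refine Finset.sum_congr rfl fun j _ => Finset.sum_congr rfl fun i _ => ?_
      rw [mul_assoc (d i * A τ i j) ((d j)⁻¹) (d j * x τ j), inv_mul_cancel_left₀ (hd j),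
        ← mul_assoc]
    rw [key, hN]
    rw [Finset.mul_sum]
    refine Finset.sum_le_sum fun j _ => ?_
    have h1 : ∑ i : Fin S, d i * A τ i j * (d j)⁻¹ ≤ -α τ := by
      have := hsum τ hτ j
      simpa [Matrix.mul_apply, Matrix.diagonal, Matrix.mul_apply, Matrix.diagonal_mul,
        Matrix.mul_diagonal] using this
    exact mul_le_mul_of_nonneg_right h1 (hsign τ hτ j).le
  -- logarithmic derivative
  have hlogd : ∀ τ ∈ Set.Icc t₁ t₂,
      HasDerivAt (fun s => Real.log (N s)) (Dv τ / N τ) τ := by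
    intro τ hτ
    exact (hNd τ hτ).log (Npos τ hτ).ne'
  have hIcc : Set.Icc t₁ t ⊆ Set.Icc t₁ t₂ := Set.Icc_subset_Icc le_rfl ht2
  have hcont : ContinuousOn (fun s => Real.log (N s)) (Set.Icc t₁ t) := fun τ hτ =>
    ((hlogd τ (hIcc hτ)).continuousAt).continuousWithinAt
  have φint : MeasureTheory.IntegrableOn (fun τ => -α τ) (Set.Icc t₁ t)
      MeasureTheory.volume := by
    have : MeasureTheory.IntegrableOn α (Set.Icc t₁ t₂) MeasureTheory.volume := by
      rwa [← intervalIntegrable_iff_integrableOn_Icc_of_le ht]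
    exact (this.mono_set hIcc).neg
  have main : Real.log (N t) - Real.log (N t₁) ≤ ∫ τ in t₁..t, -α τ := by
    refine intervalIntegral.sub_le_integral_of_hasDeriv_right_of_le ht1 hcont
      (fun τ hτ => ((hlogd τ (hIcc (Set.Ioo_subset_Icc_self hτ))).hasDerivWithinAt))
      φint (fun τ hτ => ?_)
    have hτ' := hIcc (Set.Ioo_subset_Icc_self hτ)
    rw [div_le_iff₀ (Npos τ hτ')]
    exact hDb τ hτ'
  rw [intervalIntegral.integral_neg] at main
  have h2 : Real.log (N t) ≤ -(∫ τ in t₁..t, α τ) + Real.log (N t₁) := by linarith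
  have := (Real.log_le_iff_le_exp (Npos t ⟨ht1, ht2⟩)).mp h2
  rwa [Real.exp_add, Real.exp_log (Npos t₁ ⟨le_rfl, ht⟩)] at this
end

section
/- Let B be the S×S reduced matrix of a finite birth–death chain (b_{kk} = -(λ_{k-1}+μ_k) along the appropriate indexing after conjugation) and let T be the upper triangular all-ones matrix. If B is the matrix given by (2.07) for a birth–death process with birth rates λ_k and death rates μ_k, then T B T⁻¹ is tridiagonal with diagonal entries -(λ_{k-1} + μ_k), superdiagonal entries μ_k, and subdiagonal entries λ_k. -/
private lemma sum_if_eq {n : ℕ} (g : Fin n → ℝ) (m : ℕ) :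
    (∑ k : Fin n, if (k : ℕ) = m then g k else 0) = if h : m < n then g ⟨m, h⟩ else 0 := by
  split_ifs with h
  · have he : ∀ k : Fin n, ((k : ℕ) = m) = (k = ⟨m, h⟩) := by
      intro k; simp [Fin.ext_iff]
    simp_rw [he]; simp
  · apply Finset.sum_eq_zero; intro k _
    rw [if_neg]; omega

private lemma sum_if_eq' {n : ℕ} (g : Fin n → ℝ) (m : ℕ) :
    (∑ k : Fin n, if m = (k : ℕ) + 1 then g k else 0)
      = if h : 1 ≤ m ∧ m - 1 < n then g ⟨m - 1, h.2⟩ else 0 := by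
  rcases Nat.eq_zero_or_pos m with rfl | hm
  · simp
  · have he : ∀ k : Fin n, (m = (k : ℕ) + 1) = ((k : ℕ) = m - 1) := by
      intro k; apply propext; omega
    simp_rw [he, sum_if_eq]
    split_ifs with h1 h2 <;> first | rfl | omega

set_option maxHeartbeats 4000000 in
/-- For a finite birth-death chain on {0,…,S} with transposed intensity matrix A
(a_{i,i+1} = μ_{i+1}, a_{i+1,i} = λ_i, a_{ii} = -(λ_i + μ_i), μ₀ = 0, λ_S = 0), the
reduced matrix B (b_{ij} = a_{ij} - a_{i0} for 1 ≤ i,j ≤ S) conjugated by the upper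
triangular all-ones matrix T is tridiagonal with diagonal -(λ_{k-1} + μ_k),
superdiagonal μ_k and subdiagonal λ_k. -/
theorem birth_death_reduced_conjugation (S : ℕ) (hS : 0 < S)
    (lam mu : ℕ → ℝ) (hmu0 : mu 0 = 0) (hlamS : lam S = 0)
    (A : Matrix (Fin (S + 1)) (Fin (S + 1)) ℝ)
    (hA : A = Matrix.of fun i j : Fin (S + 1) =>
      if (j : ℕ) = (i : ℕ) + 1 then mu ((i : ℕ) + 1)
      else if (i : ℕ) = (j : ℕ) + 1 then lam (j : ℕ)
      else if i = j then -(lam (i : ℕ) + mu (i : ℕ))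
      else 0)
    (B : Matrix (Fin S) (Fin S) ℝ)
    (hB : B = Matrix.of fun i j : Fin S =>
      A (Fin.succ i) (Fin.succ j) - A (Fin.succ i) 0)
    (T : Matrix (Fin S) (Fin S) ℝ)
    (hT : T = Matrix.of fun i j : Fin S => if i ≤ j then (1 : ℝ) else 0) :
    T * B * T⁻¹ = Matrix.of fun i j : Fin S =>
      if i = j then -(lam (i : ℕ) + mu ((i : ℕ) + 1))
      else if (j : ℕ) = (i : ℕ) + 1 then mu ((i : ℕ) + 1)
      else if (i : ℕ) = (j : ℕ) + 1 then lam (i : ℕ)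
      else 0 := by
  -- B entrywise, in additive indicator form
  have hB' : ∀ k j : Fin S, B k j =
      (if (k : ℕ) = (j : ℕ) + 1 then lam ((j : ℕ) + 1) else 0)
      + (if (j : ℕ) = (k : ℕ) + 1 then mu ((j : ℕ) + 1) else 0)
      + (if (k : ℕ) = (j : ℕ) then -(lam ((j : ℕ) + 1) + mu ((j : ℕ) + 1)) else 0)
      + (if (k : ℕ) = 0 then -(lam 0) else 0) := by
    intro k j
    subst hA hB
    simp only [Matrix.of_apply, Fin.val_succ, Fin.val_zero, Fin.ext_iff]
    split_ifs <;>
      first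
        | (exfalso; first | assumption | omega)
        | ring1
        | (rw [show ((j : ℕ)) = (k : ℕ) + 1 from by omega]; ring1)
        | (rw [show ((k : ℕ)) = (j : ℕ) from by omega]; ring1)
        | (rw [show ((k : ℕ)) = (j : ℕ) + 1 from by omega]; ring1)
  set Tinv : Matrix (Fin S) (Fin S) ℝ := Matrix.of fun i j : Fin S =>
    if (i : ℕ) = (j : ℕ) then (1 : ℝ) else if (j : ℕ) = (i : ℕ) + 1 then -1 else 0 with hTinv
  have hTT : T * Tinv = 1 := by
    ext i j
    rw [Matrix.mul_apply, Matrix.one_apply]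
    have hs : ∀ k : Fin S, T i k * Tinv k j =
        (if (k : ℕ) = (j : ℕ) then (if i ≤ k then (1 : ℝ) else 0) else 0)
        + (if (j : ℕ) = (k : ℕ) + 1 then (if i ≤ k then (-1 : ℝ) else 0) else 0) := by
      intro k
      rw [hT, hTinv]
      simp only [Matrix.of_apply]
      split_ifs <;> first | ring1 | (exfalso; omega)
    simp_rw [hs, Finset.sum_add_distrib, sum_if_eq, sum_if_eq']
    simp only [Fin.le_def, Fin.ext_iff]
    split_ifs <;> first | ring1 | (exfalso; omega)
  have hinv : T⁻¹ = Tinv := Matrix.inv_eq_right_inv hTT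
  have key : T * B = (Matrix.of fun i j : Fin S =>
      if i = j then -(lam (i : ℕ) + mu ((i : ℕ) + 1))
      else if (j : ℕ) = (i : ℕ) + 1 then mu ((i : ℕ) + 1)
      else if (i : ℕ) = (j : ℕ) + 1 then lam (i : ℕ)
      else 0) * T := by
    ext i j
    rw [Matrix.mul_apply, Matrix.mul_apply]
    have hL : ∀ k : Fin S, T i k * B k j =
        (if (k : ℕ) = (j : ℕ) + 1 then (if i ≤ k then lam ((j : ℕ) + 1) else 0) else 0)
        + (if (j : ℕ) = (k : ℕ) + 1 then (if i ≤ k then mu ((j : ℕ) + 1) else 0) else 0)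
        + (if (k : ℕ) = (j : ℕ) then (if i ≤ k then -(lam ((j : ℕ) + 1) + mu ((j : ℕ) + 1)) else 0) else 0)
        + (if (k : ℕ) = 0 then (if i ≤ k then -(lam 0) else 0) else 0) := by
      intro k
      rw [hB', hT]
      simp only [Matrix.of_apply]
      split_ifs <;> ring1
    have hR : ∀ k : Fin S, (Matrix.of fun i j : Fin S =>
        if i = j then -(lam (i : ℕ) + mu ((i : ℕ) + 1))
        else if (j : ℕ) = (i : ℕ) + 1 then mu ((i : ℕ) + 1)
        else if (i : ℕ) = (j : ℕ) + 1 then lam (i : ℕ)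
        else 0) i k * T k j =
        (if (k : ℕ) = (i : ℕ) then (if k ≤ j then -(lam (i : ℕ) + mu ((i : ℕ) + 1)) else 0) else 0)
        + (if (k : ℕ) = (i : ℕ) + 1 then (if k ≤ j then mu ((i : ℕ) + 1) else 0) else 0)
        + (if (i : ℕ) = (k : ℕ) + 1 then (if k ≤ j then lam (i : ℕ) else 0) else 0) := by
      intro k
      rw [hT]
      simp only [Matrix.of_apply, Fin.ext_iff]
      split_ifs <;> first | ring1 | (exfalso; omega)
    simp_rw [hL, hR, Finset.sum_add_distrib, sum_if_eq, sum_if_eq']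
    rw [dif_pos j.isLt, dif_pos i.isLt, dif_pos hS]
    simp only [Fin.le_def, Fin.ext_iff, Fin.val_mk]
    split_ifs <;>
      first
        | (exfalso; omega)
        | ring1
        | (rw [show ((i : ℕ)) = (j : ℕ) from by omega]; ring1)
        | (rw [show ((i : ℕ)) = (j : ℕ) + 1 from by omega]; ring1)
        | (rw [show ((j : ℕ)) + 1 = S from by omega, hlamS]; ring1)
        | (rw [show ((i : ℕ)) = (j : ℕ) from by omega,
               show ((j : ℕ)) + 1 = S from by omega, hlamS]; ring1)
        | (rw [show ((i : ℕ)) = 0 from by omega]; ring1)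
        | (rw [show ((j : ℕ)) + 1 = S from by omega, hlamS,
               show ((i : ℕ)) = 0 from by omega]; ring1)
        | (rw [show ((i : ℕ)) = 0 from by omega, show ((j : ℕ)) = 0 from by omega]; ring1)
        | (rw [show ((j : ℕ)) + 1 = S from by omega, hlamS,
               show ((i : ℕ)) = 0 from by omega, show ((j : ℕ)) = 0 from by omega]; ring1)
        | (rw [show ((j : ℕ)) + 1 = S from by omega, hlamS,
               show ((i : ℕ)) = 0 from by omega, show ((0 : ℕ)) + 1 = S from by omega]; ring1)
  rw [hinv, key, Matrix.mul_assoc, hTT, Matrix.mul_one]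
end

section
/- Suppose α: [0,∞) → ℝ is a continuous 1-periodic function and w(t) satisfies ‖w(t)‖ ≤ exp(-∫_s^t α(u)du) ‖w(s)‖ for all t ≥ s. Let ᾱ = ∫_0^1 α(u)du. Then for all t ≥ s, ‖w(t)‖ ≤ e^{2M} e^{-ᾱ(t-s)} ‖w(s)‖, where M = sup_{0≤τ≤1} |∫_0^τ (α(u) - ᾱ) du|. In particular, if ᾱ > 0 then ‖w(t)‖ → 0 as t → ∞ at exponential rate ᾱ. -/
open Filter

/-- For 1-periodic α, a bound ‖w(t)‖ ≤ exp(-∫_s^t α)‖w(s)‖ implies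
‖w(t)‖ ≤ e^{2M} e^{-ᾱ(t-s)} ‖w(s)‖ where ᾱ is the mean of α over one period and
M = sup_{0≤τ≤1} |∫_0^τ (α - ᾱ)|; if ᾱ > 0 then ‖w(t)‖ → 0 exponentially. -/
theorem periodic_rate_depends_on_mean {E : Type*} [NormedAddCommGroup E]
    (α : ℝ → ℝ) (hαc : Continuous α) (hper : Function.Periodic α 1)
    (w : ℝ → E)
    (hw : ∀ s t : ℝ, s ≤ t → ‖w t‖ ≤ Real.exp (-∫ u in s..t, α u) * ‖w s‖)
    (abar : ℝ) (habar : abar = ∫ u in (0 : ℝ)..1, α u)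
    (M : ℝ)
    (hM : M = ⨆ τ : Set.Icc (0 : ℝ) 1, |∫ u in (0 : ℝ)..(τ : ℝ), (α u - abar)|) :
    (∀ s t : ℝ, 0 ≤ s → s ≤ t →
      ‖w t‖ ≤ Real.exp (2 * M) * Real.exp (-abar * (t - s)) * ‖w s‖) ∧
    (0 < abar → Tendsto (fun t => ‖w t‖) atTop (nhds 0)) := by
  have hint : ∀ a b : ℝ, IntervalIntegrable (fun u => α u - abar) MeasureTheory.volume a b :=
    fun a b => (hαc.sub continuous_const).intervalIntegrable a b
  have hαint : ∀ a b : ℝ, IntervalIntegrable α MeasureTheory.volume a b :=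
    fun a b => hαc.intervalIntegrable a b
  set F : ℝ → ℝ := fun τ => ∫ u in (0:ℝ)..τ, (α u - abar) with hFdef
  have hFcont : Continuous F := intervalIntegral.continuous_primitive hint 0
  -- F is 1-periodic
  have hsub : ∀ s t : ℝ, F t - F s = ∫ u in s..t, (α u - abar) := by
    intro s t
    rw [hFdef]
    simp only
    rw [← intervalIntegral.integral_add_adjacent_intervals (hint 0 s) (hint s t)]
    ring
  have hzero : ∀ τ : ℝ, (∫ u in τ..(τ+1), (α u - abar)) = 0 := by
    intro τ
    rw [intervalIntegral.integral_sub (hαint τ (τ+1)) (intervalIntegrable_const)]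
    have h1 : (∫ u in τ..(τ+1), α u) = ∫ u in (0:ℝ)..(0+1), α u :=
      hper.intervalIntegral_add_eq τ 0
    rw [h1]
    simp [habar]
  have hFper : Function.Periodic F 1 := by
    intro τ
    have := hsub τ (τ + 1)
    rw [hzero τ] at this
    linarith
  -- bound |F τ| ≤ M everywhere
  have hbdd : BddAbove (Set.range fun τ : Set.Icc (0:ℝ) 1 => |F (τ : ℝ)|) :=
    (isCompact_range ((hFcont.comp continuous_subtype_val).abs)).bddAbove
  have hFM : ∀ τ : ℝ, |F τ| ≤ M := by
    intro τ
    have hfr : F (Int.fract τ) = F τ := by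
      have h := hFper.sub_int_mul_eq (x := τ) ⌊τ⌋
      rw [mul_one, Int.self_sub_floor] at h
      exact h
    have hmem : Int.fract τ ∈ Set.Icc (0:ℝ) 1 :=
      ⟨Int.fract_nonneg τ, (Int.fract_lt_one τ).le⟩
    have := le_ciSup hbdd (⟨Int.fract τ, hmem⟩ : Set.Icc (0:ℝ) 1)
    rw [hM]
    calc |F τ| = |F (Int.fract τ)| := by rw [hfr]
      _ ≤ _ := this
  have hpart1 : ∀ s t : ℝ, 0 ≤ s → s ≤ t →
      ‖w t‖ ≤ Real.exp (2 * M) * Real.exp (-abar * (t - s)) * ‖w s‖ := by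
    intro s t hs hst
    have h1 : (∫ u in s..t, α u) = abar * (t - s) + (F t - F s) := by
      have := hsub s t
      rw [intervalIntegral.integral_sub (hαint s t) intervalIntegrable_const,
        intervalIntegral.integral_const] at this
      simp at this
      linarith
    have h2 : -(∫ u in s..t, α u) ≤ 2 * M + (-abar * (t - s)) := by
      have h3 := hFM s
      have h4 := hFM t
      rw [h1]
      have := abs_le.1 h3
      have := abs_le.1 h4
      nlinarith [abs_le.1 h3, abs_le.1 h4]
    calc ‖w t‖ ≤ Real.exp (-∫ u in s..t, α u) * ‖w s‖ := hw s t hst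
      _ ≤ Real.exp (2 * M + (-abar * (t - s))) * ‖w s‖ :=
          mul_le_mul_of_nonneg_right (Real.exp_le_exp.2 h2) (norm_nonneg _)
      _ = Real.exp (2 * M) * Real.exp (-abar * (t - s)) * ‖w s‖ := by
          rw [Real.exp_add]
  refine ⟨hpart1, ?_⟩
  intro hpos
  have h2 : Tendsto (fun t : ℝ => -abar * t) atTop atBot := by
    have h := tendsto_neg_atTop_atBot.comp
      (Tendsto.const_mul_atTop hpos (tendsto_id : Tendsto (fun t : ℝ => t) atTop atTop))
    simpa [Function.comp_def, neg_mul] using h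
  have h3 : Tendsto (fun t : ℝ => Real.exp (-abar * t)) atTop (nhds 0) :=
    Real.tendsto_exp_atBot.comp h2
  have hg : Tendsto (fun t : ℝ => Real.exp (2 * M) * Real.exp (-abar * t) * ‖w 0‖)
      atTop (nhds 0) := by
    simpa only [mul_zero, zero_mul] using ((h3.const_mul (Real.exp (2 * M))).mul_const ‖w 0‖)
  refine squeeze_zero' (Eventually.of_forall fun t => norm_nonneg _) ?_ hg
  filter_upwards [eventually_ge_atTop (0 : ℝ)] with t ht
  simpa only [sub_zero] using hpart1 0 t le_rfl ht
end
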